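/- Let α₁, α₂, α₃ ∈ ℂ be pairwise distinct, κ₁, κ₂, κ₃ ∈ ℂ∖{0}, and let L ⊆ (ℂ∖{0})³ be the image of the map z ↦ (κ₁(z−α₁), κ₂(z−α₂), κ₃(z−α₃)) defined on ℂ∖{α₁,α₂,α₃}. Set u₀ = (1,1,1), u₁ = (−1,0,0), u₂ = (0,−1,0), u₃ = (0,0,−1). Then there exist v ∈ ℝ³, l ≥ 0, a partition {0,1,2,3} = {a,b} ⊔ {c,d}, and, with w = v + l·(u_c+u_d) and Γ = {v + t·u_a : t ≥ 0} ∪ {v + t·u_b : t ≥ 0} ∪ {v + t·(u_c+u_d) : t ∈ [0,l]} ∪ {w + t·u_c : t ≥ 0} ∪ {w + t·u_d : t ≥ 0}, a map φ : L → Γ such that ‖Log(q) − φ(q)‖_∞ ≤ 8 log 2 for all q ∈ L and moreover Γ ∖ (U_{8 log 2}({v}) ∪ U_{8 log 2}({w})) ⊆ φ(L). -/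

import Mathlib

/-- Coordinate-wise logarithm of moduli, `Log(z)_i = log |z_i|`. -/
noncomputable def LogMap {n : ℕ} (z : Fin n → ℂ) : Fin n → ℝ :=
  fun i => Real.log ‖z i‖

/-- Open ε-neighbourhood of a set with respect to the sup norm on `Fin n → ℝ`. -/
def nbhd {n : ℕ} (ε : ℝ) (X : Set (Fin n → ℝ)) : Set (Fin n → ℝ) :=
  {y | ∃ x ∈ X, ‖y - x‖ < ε}

/-- Ray emanating from `v` in direction `d`. -/
def ray {n : ℕ} (v d : Fin n → ℝ) : Set (Fin n → ℝ) :=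
  {x | ∃ t : ℝ, 0 ≤ t ∧ x = v + t • d}

/-- Segment from `v` in direction `d` of parameter length `l`. -/
def seg {n : ℕ} (v d : Fin n → ℝ) (l : ℝ) : Set (Fin n → ℝ) :=
  {x | ∃ t : ℝ, 0 ≤ t ∧ t ≤ l ∧ x = v + t • d}

/-- The four end directions `u₀ = (1,1,1)`, `u₁ = (-1,0,0)`, `u₂ = (0,-1,0)`,
`u₃ = (0,0,-1)` of a tropical line in `ℝ³`. -/
noncomputable def lineDir : Fin 4 → Fin 3 → ℝ :=
  ![![1, 1, 1], ![-1, 0, 0], ![0, -1, 0], ![0, 0, -1]]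

/-- Image of a tropical line in `ℝ³`: two vertices `v` and `w = v + l•(u_c + u_d)`
joined by a bounded edge, with rays `u_a, u_b` at `v` and rays `u_c, u_d` at `w`. -/
noncomputable def tropLine3 (a b c d : Fin 4) (v : Fin 3 → ℝ) (l : ℝ) :
    Set (Fin 3 → ℝ) :=
  ray v (lineDir a) ∪ ray v (lineDir b) ∪
    seg v (lineDir c + lineDir d) l ∪
    ray (v + l • (lineDir c + lineDir d)) (lineDir c) ∪
    ray (v + l • (lineDir c + lineDir d)) (lineDir d)

lemma ld_zero : lineDir 0 = fun _ => (1:ℝ) := by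
  funext m; fin_cases m <;> norm_num [lineDir, Matrix.vecHead, Matrix.vecTail, Fin.ext_iff]

lemma ld_succ (p : Fin 3) : lineDir p.succ = fun m => if m = p then (-1:ℝ) else 0 := by
  fin_cases p <;> · funext m; fin_cases m <;> norm_num [lineDir, Matrix.vecHead, Matrix.vecTail, Fin.ext_iff, Matrix.cons_val_two]

lemma edge_dir (k : Fin 3) : lineDir 0 + lineDir k.succ = fun m => if m = k then (0:ℝ) else 1 := by
  rw [ld_zero, ld_succ]; funext m; by_cases h : m = k <;> simp [h]

lemma ld_norm_le (p : Fin 4) : ‖lineDir p‖ ≤ 1 := by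
  rw [pi_norm_le_iff_of_nonneg (by norm_num)]
  intro m; fin_cases p <;> fin_cases m <;> norm_num [lineDir, Matrix.vecHead, Matrix.vecTail, Fin.ext_iff]

lemma edge_norm_le (k : Fin 3) : ‖lineDir 0 + lineDir k.succ‖ ≤ 1 := by
  rw [edge_dir, pi_norm_le_iff_of_nonneg (by norm_num)]
  intro m; by_cases h : m = k <;> simp [h]

lemma log_close {x y : ℝ} (hx : 0 < x) (hy : 0 < y) (h1 : x ≤ 8 * y) (h2 : y ≤ 8 * x) :
    |Real.log x - Real.log y| ≤ 8 * Real.log 2 := by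
  have l8 : Real.log 8 = 3 * Real.log 2 := by
    rw [show (8:ℝ) = 2^3 by norm_num, Real.log_pow]; push_cast; ring
  have h2pos : (0:ℝ) < Real.log 2 := Real.log_pos (by norm_num)
  rw [abs_sub_le_iff]
  constructor
  · have : Real.log x ≤ Real.log (8 * y) := Real.log_le_log (by positivity) h1
    rw [Real.log_mul (by norm_num) hy.ne'] at this
    nlinarith
  · have : Real.log y ≤ Real.log (8 * x) := Real.log_le_log (by positivity) h2
    rw [Real.log_mul (by norm_num) hx.ne'] at this
    nlinarith

lemma dist_param (aa bb : ℂ) (s : ℝ) :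
    dist (aa + (Real.exp s : ℂ) * (bb - aa)) aa = Real.exp s * dist aa bb := by
  rw [Complex.dist_eq, Complex.dist_eq,
    show aa + (Real.exp s : ℂ) * (bb - aa) - aa = (Real.exp s : ℂ) * (bb - aa) by ring,
    norm_mul, Complex.norm_real, Real.norm_eq_abs, Real.abs_exp, norm_sub_rev]

lemma fin3_cover {i j k m : Fin 3} (hij : i ≠ j) (hik : i ≠ k) (hjk : j ≠ k) :
    m = i ∨ m = j ∨ m = k := by
  have h1 := i.isLt; have h2 := j.isLt; have h3 := k.isLt; have h4 := m.isLt
  simp only [ne_eq, Fin.ext_iff] at *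
  omega

/-- the spine projection (translation-normalised): coordinates without the `log|κ|` shift. -/
noncomputable def spineG (α : Fin 3 → ℂ) (i j k : Fin 3) (z : ℂ) : Fin 3 → ℝ :=
  if dist z (α i) ≤ dist (α i) (α j) / 2 then
    fun m => if m = i then Real.log (dist z (α i))
      else if m = k then Real.log (dist (α i) (α k)) else Real.log (dist (α i) (α j))
  else if dist z (α j) ≤ dist (α i) (α j) / 2 then
    fun m => if m = j then Real.log (dist z (α j))
      else if m = k then Real.log (dist (α i) (α k)) else Real.log (dist (α i) (α j))
  else if dist z (α k) ≤ dist (α i) (α k) / 4 then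
    fun m => if m = k then Real.log (dist z (α k)) else Real.log (dist (α i) (α k))
  else if dist z (α i) ≤ dist (α i) (α k) then
    fun m => if m = k then Real.log (dist (α i) (α k))
      else Real.log (min (max (dist z (α i)) (dist (α i) (α j))) (dist (α i) (α k)))
  else fun _ => Real.log (dist z (α i))

set_option maxHeartbeats 2000000 in
theorem core (α κ : Fin 3 → ℂ) (i j k : Fin 3) (hij : i ≠ j) (hik : i ≠ k) (hjk : j ≠ k)
    (hαij : α i ≠ α j) (hκ : ∀ m, κ m ≠ 0)
    (h1 : dist (α i) (α j) ≤ dist (α i) (α k))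
    (h2 : dist (α i) (α j) ≤ dist (α j) (α k)) :
    ∃ (v : Fin 3 → ℝ) (l : ℝ) (a b c d : Fin 4) (φ : (Fin 3 → ℂ) → (Fin 3 → ℝ)),
      0 ≤ l ∧ a ≠ b ∧ a ≠ c ∧ a ≠ d ∧ b ≠ c ∧ b ≠ d ∧ c ≠ d ∧
      (∀ q ∈ (fun z : ℂ => fun m => κ m * (z - α m)) '' {z : ℂ | ∀ m, z ≠ α m},
        φ q ∈ tropLine3 a b c d v l ∧ ‖LogMap q - φ q‖ ≤ 8 * Real.log 2) ∧
      tropLine3 a b c d v l \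
          (nbhd (8 * Real.log 2) {v} ∪
            nbhd (8 * Real.log 2) {v + l • (lineDir c + lineDir d)})
        ⊆ φ '' ((fun z : ℂ => fun m => κ m * (z - α m)) '' {z : ℂ | ∀ m, z ≠ α m}) := by
  set δ := dist (α i) (α j) with hδdef
  set D := dist (α i) (α k) with hDdef
  have hδ0 : 0 < δ := dist_pos.2 hαij
  have hD0 : 0 < D := lt_of_lt_of_le hδ0 h1
  set c : Fin 3 → ℝ := fun m => Real.log ‖κ m‖ with hcdef
  set v : Fin 3 → ℝ := fun m => c m + (if m = k then Real.log D else Real.log δ) with hvdef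
  set l : ℝ := Real.log D - Real.log δ with hldef
  set F : ℂ → Fin 3 → ℝ := fun z => fun m => c m + spineG α i j k z m with hFdef
  have hl0 : 0 ≤ l := by
    have := Real.log_le_log hδ0 h1
    simp only [hldef]; linarith
  have hw : v + l • (lineDir 0 + lineDir k.succ) = fun m => c m + Real.log D := by
    rw [edge_dir]; funext m
    by_cases hm : m = k <;> simp [hvdef, hm, hldef] <;> ring
  have key1 : ∀ z : ℂ, (∀ m, z ≠ α m) →
      F z ∈ tropLine3 i.succ j.succ 0 k.succ v l ∧
      ∀ m, |Real.log ‖κ m * (z - α m)‖ - F z m| ≤ 8 * Real.log 2 := by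
    intro z hz
    have rpos : ∀ m, 0 < dist z (α m) := fun m => dist_pos.2 (hz m)
    have T1 : δ ≤ dist z (α i) + dist z (α j) := by
      rw [hδdef, dist_comm z (α i)]; exact dist_triangle _ _ _
    have T2 : dist z (α j) ≤ dist z (α i) + δ := by
      rw [hδdef]; exact dist_triangle _ _ _
    have T2' : dist z (α i) ≤ dist z (α j) + δ := by
      rw [hδdef, dist_comm (α i) (α j)]; exact dist_triangle _ _ _
    have T3 : D ≤ dist z (α i) + dist z (α k) := by
      rw [hDdef, dist_comm z (α i)]; exact dist_triangle _ _ _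
    have T4 : dist z (α k) ≤ dist z (α i) + D := by
      rw [hDdef]; exact dist_triangle _ _ _
    have T4' : dist z (α i) ≤ dist z (α k) + D := by
      rw [hDdef, dist_comm (α i) (α k)]; exact dist_triangle _ _ _
    have T5 : dist (α j) (α k) ≤ dist z (α j) + dist z (α k) := by
      rw [dist_comm z (α j)]; exact dist_triangle _ _ _
    have T6 : dist z (α k) ≤ dist z (α j) + dist (α j) (α k) := dist_triangle _ _ _
    have T7 : dist z (α j) ≤ dist z (α k) + dist (α j) (α k) := by
      rw [dist_comm (α j) (α k)]; exact dist_triangle _ _ _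
    have E1 : D ≤ δ + dist (α j) (α k) := by
      rw [hDdef, hδdef]; exact dist_triangle _ _ _
    have E2 : dist (α j) (α k) ≤ δ + D := by
      rw [hDdef, hδdef, dist_comm (α i) (α j)]; exact dist_triangle _ _ _
    have habs : ∀ m, Real.log ‖κ m * (z - α m)‖ =
        c m + Real.log (dist z (α m)) := by
      intro m
      have hd : ‖z - α m‖ = dist z (α m) := (Complex.dist_eq z (α m)).symm
      rw [norm_mul, hd, Real.log_mul (norm_ne_zero_iff.2 (hκ m)) (rpos m).ne']
    have habs' : ∀ (x : ℝ) (m : Fin 3), Real.log ‖κ m * (z - α m)‖ - (c m + x)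
        = Real.log (dist z (α m)) - x := by
      intro x m; rw [habs m]; ring
    by_cases B1 : dist z (α i) ≤ δ / 2
    · -- branch 1 : ray u_i at v
      have hG : spineG α i j k z = fun m => if m = i then Real.log (dist z (α i))
          else if m = k then Real.log D else Real.log δ := by
        unfold spineG
        rw [← hδdef, ← hDdef, if_pos B1]
      constructor
      · unfold tropLine3
        refine Set.mem_union_left _ (Set.mem_union_left _ (Set.mem_union_left _
          (Set.mem_union_left _ ⟨Real.log δ - Real.log (dist z (α i)), ?_, ?_⟩)))
        · have := Real.log_le_log (rpos i) (by linarith : dist z (α i) ≤ δ)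
          linarith
        · funext m
          simp only [hFdef, hG, hvdef, ld_succ, Pi.add_apply, Pi.smul_apply]
          rcases fin3_cover hij hik hjk (m := m) with rfl | rfl | rfl
          · simp [hik]
          · simp [hij.symm, hjk]
          · simp [hik.symm, hjk.symm]
      · intro m
        simp only [hFdef, hG]
        rw [habs' _ m]
        rcases fin3_cover hij hik hjk (m := m) with hm | hm | hm
        · rw [hm]; simp
          linarith [Real.log_pos (show (1:ℝ) < 2 by norm_num)]
        · rw [hm, if_neg hij.symm, if_neg hjk]
          exact log_close (rpos j) hδ0 (by linarith) (by linarith)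
        · rw [hm, if_neg hik.symm, if_pos rfl]
          exact log_close (rpos k) hD0 (by linarith) (by linarith)
    · have B1' : δ / 2 < dist z (α i) := not_le.1 B1
      by_cases B2 : dist z (α j) ≤ δ / 2
      · -- branch 2 : ray u_j at v
        have hG : spineG α i j k z = fun m => if m = j then Real.log (dist z (α j))
            else if m = k then Real.log D else Real.log δ := by
          unfold spineG
          rw [← hδdef, ← hDdef, if_neg B1, if_pos B2]
        constructor
        · unfold tropLine3
          refine Set.mem_union_left _ (Set.mem_union_left _ (Set.mem_union_left _
            (Set.mem_union_right _ ⟨Real.log δ - Real.log (dist z (α j)), ?_, ?_⟩)))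
          · have := Real.log_le_log (rpos j) (by linarith : dist z (α j) ≤ δ)
            linarith
          · funext m
            simp only [hFdef, hG, hvdef, ld_succ, Pi.add_apply, Pi.smul_apply]
            rcases fin3_cover hij hik hjk (m := m) with hm | hm | hm <;> rw [hm] <;>
              simp [hij, hik, hjk, hij.symm, hik.symm, hjk.symm] <;> try ring
        · intro m
          simp only [hFdef, hG]
          rw [habs' _ m]
          rcases fin3_cover hij hik hjk (m := m) with hm | hm | hm
          · rw [hm, if_neg hij, if_neg hik]
            exact log_close (rpos i) hδ0 (by linarith) (by linarith)
          · rw [hm]; simp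
            linarith [Real.log_pos (show (1:ℝ) < 2 by norm_num)]
          · rw [hm, if_neg hjk.symm, if_pos rfl]
            exact log_close (rpos k) hD0 (by linarith) (by linarith)
      · have B2' : δ / 2 < dist z (α j) := not_le.1 B2
        by_cases B3 : dist z (α k) ≤ D / 4
        · -- branch 3 : ray u_k at w
          have hG : spineG α i j k z = fun m => if m = k then Real.log (dist z (α k))
              else Real.log D := by
            unfold spineG
            rw [← hδdef, ← hDdef, if_neg B1, if_neg B2, if_pos B3]
          constructor
          · unfold tropLine3
            refine Set.mem_union_right _ ⟨Real.log D - Real.log (dist z (α k)), ?_, ?_⟩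
            · have := Real.log_le_log (rpos k) (by linarith : dist z (α k) ≤ D)
              linarith
            · rw [hw]
              funext m
              simp only [hFdef, hG, ld_succ, Pi.add_apply, Pi.smul_apply]
              by_cases hm : m = k <;> simp [hm] <;> ring
          · intro m
            simp only [hFdef, hG]
            rw [habs' _ m]
            rcases fin3_cover hij hik hjk (m := m) with hm | hm | hm
            · rw [hm, if_neg hik]
              exact log_close (rpos i) hD0 (by linarith) (by linarith)
            · rw [hm, if_neg hjk]
              exact log_close (rpos j) hD0 (by linarith) (by linarith)
            · rw [hm]; simp
              linarith [Real.log_pos (show (1:ℝ) < 2 by norm_num)]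
        · have B3' : D / 4 < dist z (α k) := not_le.1 B3
          by_cases B4 : dist z (α i) ≤ D
          · -- branch 4 : bounded edge
            have hG : spineG α i j k z = fun m => if m = k then Real.log D
                else Real.log (min (max (dist z (α i)) δ) D) := by
              unfold spineG
              rw [← hδdef, ← hDdef, if_neg B1, if_neg B2, if_neg B3, if_pos B4]
            have hρδ : δ ≤ min (max (dist z (α i)) δ) D := le_min (le_max_right _ _) h1
            have hρD : min (max (dist z (α i)) δ) D ≤ D := min_le_right _ _
            have hρri : dist z (α i) ≤ min (max (dist z (α i)) δ) D :=
              le_min (le_max_left _ _) B4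
            have hρ2 : min (max (dist z (α i)) δ) D ≤ max (dist z (α i)) δ := min_le_left _ _
            have hmaxle : max (dist z (α i)) δ ≤ dist z (α i) + δ :=
              max_le (by linarith) (by linarith)
            have hρpos : 0 < min (max (dist z (α i)) δ) D := lt_of_lt_of_le hδ0 hρδ
            constructor
            · unfold tropLine3
              refine Set.mem_union_left _ (Set.mem_union_left _ (Set.mem_union_right _
                ⟨Real.log (min (max (dist z (α i)) δ) D) - Real.log δ, ?_, ?_, ?_⟩))
              · have := Real.log_le_log hδ0 hρδ
                linarith
              · have := Real.log_le_log hρpos hρD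
                simp only [hldef]; linarith
              · funext m
                simp only [hFdef, hG, hvdef, edge_dir, Pi.add_apply, Pi.smul_apply]
                by_cases hm : m = k <;> simp [hm] <;> ring
            · intro m
              simp only [hFdef, hG]
              rw [habs' _ m]
              rcases fin3_cover hij hik hjk (m := m) with hm | hm | hm
              · rw [hm, if_neg hik]
                exact log_close (rpos i) hρpos (by linarith) (by linarith)
              · rw [hm, if_neg hjk]
                exact log_close (rpos j) hρpos (by linarith) (by linarith)
              · rw [hm, if_pos rfl]
                exact log_close (rpos k) hD0 (by linarith) (by linarith)
          · -- branch 5 : ray u₀ at w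
            have B4' : D < dist z (α i) := not_le.1 B4
            have hG : spineG α i j k z = fun _ => Real.log (dist z (α i)) := by
              unfold spineG
              rw [← hδdef, ← hDdef, if_neg B1, if_neg B2, if_neg B3, if_neg B4]
            constructor
            · unfold tropLine3
              refine Set.mem_union_left _ (Set.mem_union_right _
                ⟨Real.log (dist z (α i)) - Real.log D, ?_, ?_⟩)
              · have := Real.log_le_log hD0 (le_of_lt B4')
                linarith
              · rw [hw, ld_zero]
                funext m
                simp only [hFdef, hG, Pi.add_apply, Pi.smul_apply, smul_eq_mul]
                ring
            · intro m
              simp only [hFdef, hG]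
              rw [habs' _ m]
              rcases fin3_cover hij hik hjk (m := m) with hm | hm | hm
              · rw [hm]; simp
                linarith [Real.log_pos (show (1:ℝ) < 2 by norm_num)]
              · rw [hm]
                exact log_close (rpos j) (rpos i) (by linarith) (by linarith)
              · rw [hm]
                exact log_close (rpos k) (rpos i) (by linarith) (by linarith)
  have hε0 : 0 < 8 * Real.log 2 := by
    have := Real.log_pos (show (1:ℝ) < 2 by norm_num); linarith
  have he256 : Real.exp (8 * Real.log 2) = 256 := by
    rw [show (8:ℝ) * Real.log 2 = Real.log (2 ^ 8) by rw [Real.log_pow]; push_cast; ring,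
      Real.exp_log (by norm_num)]
    norm_num
  have normle : ∀ (t : ℝ) (d : Fin 3 → ℝ), 0 ≤ t → ‖d‖ ≤ 1 → ‖t • d‖ ≤ t := by
    intro t d ht hd
    rw [norm_smul, Real.norm_eq_abs, abs_of_nonneg ht]
    nlinarith [norm_nonneg d]
  have key2 : ∀ p ∈ tropLine3 i.succ j.succ 0 k.succ v l \
      (nbhd (8 * Real.log 2) {v} ∪
        nbhd (8 * Real.log 2) {v + l • (lineDir 0 + lineDir k.succ)}),
      ∃ z : ℂ, (∀ m, z ≠ α m) ∧ F z = p := by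
    intro p hp
    obtain ⟨hpΓ, hpn⟩ := hp
    have hnv : 8 * Real.log 2 ≤ ‖p - v‖ := by
      by_contra h
      exact hpn (Set.mem_union_left _ ⟨v, rfl, not_le.1 h⟩)
    have hnw : 8 * Real.log 2 ≤ ‖p - (v + l • (lineDir 0 + lineDir k.succ))‖ := by
      by_contra h
      exact hpn (Set.mem_union_right _ ⟨_, rfl, not_le.1 h⟩)
    unfold tropLine3 at hpΓ
    simp only [Set.mem_union] at hpΓ
    rcases hpΓ with ((((⟨t, ht0, rfl⟩ | ⟨t, ht0, rfl⟩) | ⟨t, ht0, htl, rfl⟩) |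
      ⟨t, ht0, rfl⟩) | ⟨t, ht0, rfl⟩)
    · -- ray u_i at v
      have ht8 : 8 * Real.log 2 ≤ t := by
        have h := hnv
        rw [add_sub_cancel_left] at h
        exact h.trans (normle t _ ht0 (ld_norm_le _))
      set z : ℂ := α i + (Real.exp (-t) : ℂ) * (α j - α i) with hzdef
      have hri : dist z (α i) = Real.exp (-t) * δ := by
        rw [hδdef, hzdef]; exact dist_param _ _ _
      have hexp : Real.exp (-t) ≤ 1 / 256 := by
        rw [show (1:ℝ)/256 = (Real.exp (8 * Real.log 2))⁻¹ by rw [he256]; norm_num, ← Real.exp_neg]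
        exact Real.exp_le_exp.2 (by linarith)
      have hexp0 : 0 < Real.exp (-t) := Real.exp_pos _
      have hri' : dist z (α i) ≤ δ / 2 := by
        rw [hri]; nlinarith
      have hripos : 0 < dist z (α i) := by rw [hri]; positivity
      have U1 : δ ≤ dist z (α i) + dist z (α j) := by
        rw [hδdef, dist_comm z (α i)]; exact dist_triangle _ _ _
      have U2 : D ≤ dist z (α i) + dist z (α k) := by
        rw [hDdef, dist_comm z (α i)]; exact dist_triangle _ _ _
      have hzi : z ≠ α i := dist_pos.1 hripos
      have hzj : z ≠ α j := dist_pos.1 (by nlinarith)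
      have hzk : z ≠ α k := dist_pos.1 (by nlinarith)
      refine ⟨z, fun m => by
        rcases fin3_cover hij hik hjk (m := m) with hm | hm | hm <;> rw [hm] <;> assumption, ?_⟩
      have hG : spineG α i j k z = fun m => if m = i then Real.log (dist z (α i))
          else if m = k then Real.log D else Real.log δ := by
        unfold spineG
        rw [← hδdef, ← hDdef, if_pos hri']
      funext m
      simp only [hFdef, hG, hvdef, ld_succ, Pi.add_apply, Pi.smul_apply]
      rcases fin3_cover hij hik hjk (m := m) with hm | hm | hm <;> rw [hm] <;>
        simp [hij, hik, hjk, hij.symm, hik.symm, hjk.symm]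
      rw [hri, Real.log_mul (Real.exp_ne_zero _) hδ0.ne', Real.log_exp]
      ring
    · -- ray u_j at v
      have ht8 : 8 * Real.log 2 ≤ t := by
        have h := hnv
        rw [add_sub_cancel_left] at h
        exact h.trans (normle t _ ht0 (ld_norm_le _))
      set z : ℂ := α j + (Real.exp (-t) : ℂ) * (α i - α j) with hzdef
      have hrj : dist z (α j) = Real.exp (-t) * δ := by
        rw [hδdef, hzdef, dist_comm (α i) (α j)]; exact dist_param _ _ _
      have hexp : Real.exp (-t) ≤ 1 / 256 := by
        rw [show (1:ℝ)/256 = (Real.exp (8 * Real.log 2))⁻¹ by rw [he256]; norm_num, ← Real.exp_neg]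
        exact Real.exp_le_exp.2 (by linarith)
      have hexp0 : 0 < Real.exp (-t) := Real.exp_pos _
      have hrj' : dist z (α j) ≤ δ / 2 := by rw [hrj]; nlinarith
      have hrjpos : 0 < dist z (α j) := by rw [hrj]; positivity
      have U1 : δ ≤ dist z (α i) + dist z (α j) := by
        rw [hδdef, dist_comm z (α i)]; exact dist_triangle _ _ _
      have U2 : dist (α j) (α k) ≤ dist z (α j) + dist z (α k) := by
        rw [dist_comm z (α j)]; exact dist_triangle _ _ _
      have hB1 : ¬ dist z (α i) ≤ δ / 2 := not_le.2 (by nlinarith)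
      have hzi : z ≠ α i := dist_pos.1 (by nlinarith)
      have hzj : z ≠ α j := dist_pos.1 hrjpos
      have hzk : z ≠ α k := dist_pos.1 (by nlinarith)
      refine ⟨z, fun m => by
        rcases fin3_cover hij hik hjk (m := m) with hm | hm | hm <;> rw [hm] <;> assumption, ?_⟩
      have hG : spineG α i j k z = fun m => if m = j then Real.log (dist z (α j))
          else if m = k then Real.log D else Real.log δ := by
        unfold spineG
        rw [← hδdef, ← hDdef, if_neg hB1, if_pos hrj']
      funext m
      simp only [hFdef, hG, hvdef, ld_succ, Pi.add_apply, Pi.smul_apply]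
      rcases fin3_cover hij hik hjk (m := m) with hm | hm | hm <;> rw [hm] <;>
        simp [hij, hik, hjk, hij.symm, hik.symm, hjk.symm]
      rw [hrj, Real.log_mul (Real.exp_ne_zero _) hδ0.ne', Real.log_exp]
      ring
    · -- bounded edge
      have ht8 : 8 * Real.log 2 ≤ t := by
        have h := hnv
        rw [add_sub_cancel_left] at h
        exact h.trans (normle t _ ht0 (edge_norm_le _))
      have htl8 : 8 * Real.log 2 ≤ l - t := by
        have heq : v + t • (lineDir 0 + lineDir k.succ) -
            (v + l • (lineDir 0 + lineDir k.succ)) =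
            (t - l) • (lineDir 0 + lineDir k.succ) := by
          module
        have h := hnw
        rw [heq, norm_smul, Real.norm_eq_abs, abs_of_nonpos (by linarith)] at h
        nlinarith [edge_norm_le k, norm_nonneg (lineDir 0 + lineDir k.succ)]
      set z : ℂ := α i + (Real.exp t : ℂ) * (α j - α i) with hzdef
      have hri : dist z (α i) = Real.exp t * δ := by
        rw [hδdef, hzdef]; exact dist_param _ _ _
      have hexp : 256 ≤ Real.exp t := by
        rw [← he256]; exact Real.exp_le_exp.2 (by linarith)
      have hexpD : Real.exp t * δ ≤ D / 256 := by
        have h1' : Real.exp t ≤ Real.exp (l - 8 * Real.log 2) := Real.exp_le_exp.2 (by linarith)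
        have h2' : Real.exp (l - 8 * Real.log 2) = (D / δ) / 256 := by
          rw [Real.exp_sub, he256, hldef, Real.exp_sub, Real.exp_log hD0, Real.exp_log hδ0]
        rw [h2'] at h1'
        have := mul_le_mul_of_nonneg_right h1' hδ0.le
        calc Real.exp t * δ ≤ (D / δ) / 256 * δ := this
          _ = D / 256 := by field_simp
      have hriD : dist z (α i) ≤ D := by rw [hri]; linarith
      have hripos : 0 < dist z (α i) := by
        rw [hri]; positivity
      have U1 : dist z (α i) ≤ dist z (α j) + δ := by
        rw [hδdef, dist_comm (α i) (α j)]; exact dist_triangle _ _ _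
      have U2 : D ≤ dist z (α i) + dist z (α k) := by
        rw [hDdef, dist_comm z (α i)]; exact dist_triangle _ _ _
      have hB1 : ¬ dist z (α i) ≤ δ / 2 := not_le.2 (by nlinarith)
      have hB2 : ¬ dist z (α j) ≤ δ / 2 := not_le.2 (by nlinarith)
      have hB3 : ¬ dist z (α k) ≤ D / 4 := not_le.2 (by nlinarith)
      have hzi : z ≠ α i := dist_pos.1 hripos
      have hzj : z ≠ α j := dist_pos.1 (by nlinarith)
      have hzk : z ≠ α k := dist_pos.1 (by nlinarith)
      refine ⟨z, fun m => by
        rcases fin3_cover hij hik hjk (m := m) with hm | hm | hm <;> rw [hm] <;> assumption, ?_⟩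
      have hρ : min (max (dist z (α i)) δ) D = dist z (α i) := by
        rw [max_eq_left (by nlinarith), min_eq_left hriD]
      have hG : spineG α i j k z = fun m => if m = k then Real.log D
          else Real.log (dist z (α i)) := by
        unfold spineG
        rw [← hδdef, ← hDdef, if_neg hB1, if_neg hB2, if_neg hB3, if_pos hriD, hρ]
      funext m
      simp only [hFdef, hG, hvdef, edge_dir, Pi.add_apply, Pi.smul_apply, smul_eq_mul]
      by_cases hm : m = k
      · simp [hm]
      · simp only [if_neg hm]
        rw [hri, Real.log_mul (Real.exp_ne_zero _) hδ0.ne', Real.log_exp]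
        ring
    · -- ray u₀ at w
      have ht8 : 8 * Real.log 2 ≤ t := by
        have h := hnw
        rw [add_sub_cancel_left] at h
        exact h.trans (normle t _ ht0 (ld_norm_le _))
      set z : ℂ := α i + (Real.exp t : ℂ) * (α k - α i) with hzdef
      have hri : dist z (α i) = Real.exp t * D := by
        rw [hDdef, hzdef]; exact dist_param _ _ _
      have hexp : 256 ≤ Real.exp t := by
        rw [← he256]; exact Real.exp_le_exp.2 (by linarith)
      have hripos : 0 < dist z (α i) := by rw [hri]; positivity
      have U1 : dist z (α i) ≤ dist z (α j) + δ := by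
        rw [hδdef, dist_comm (α i) (α j)]; exact dist_triangle _ _ _
      have U2 : dist z (α i) ≤ dist z (α k) + D := by
        rw [hDdef, dist_comm (α i) (α k)]; exact dist_triangle _ _ _
      have hB1 : ¬ dist z (α i) ≤ δ / 2 := not_le.2 (by nlinarith)
      have hB2 : ¬ dist z (α j) ≤ δ / 2 := not_le.2 (by nlinarith)
      have hB3 : ¬ dist z (α k) ≤ D / 4 := not_le.2 (by nlinarith)
      have hB4 : ¬ dist z (α i) ≤ D := not_le.2 (by nlinarith)
      have hzi : z ≠ α i := dist_pos.1 hripos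
      have hzj : z ≠ α j := dist_pos.1 (by nlinarith)
      have hzk : z ≠ α k := dist_pos.1 (by nlinarith)
      refine ⟨z, fun m => by
        rcases fin3_cover hij hik hjk (m := m) with hm | hm | hm <;> rw [hm] <;> assumption, ?_⟩
      have hG : spineG α i j k z = fun _ => Real.log (dist z (α i)) := by
        unfold spineG
        rw [← hδdef, ← hDdef, if_neg hB1, if_neg hB2, if_neg hB3, if_neg hB4]
      rw [hw, ld_zero]
      funext m
      simp only [hFdef, hG, Pi.add_apply, Pi.smul_apply, smul_eq_mul]
      rw [hri, Real.log_mul (Real.exp_ne_zero _) hD0.ne', Real.log_exp]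
      ring
    · -- ray u_k at w
      have ht8 : 8 * Real.log 2 ≤ t := by
        have h := hnw
        rw [add_sub_cancel_left] at h
        exact h.trans (normle t _ ht0 (ld_norm_le _))
      set z : ℂ := α k + (Real.exp (-t) : ℂ) * (α i - α k) with hzdef
      have hrk : dist z (α k) = Real.exp (-t) * D := by
        rw [hDdef, hzdef, dist_comm (α i) (α k)]; exact dist_param _ _ _
      have hexp : Real.exp (-t) ≤ 1 / 256 := by
        rw [show (1:ℝ)/256 = (Real.exp (8 * Real.log 2))⁻¹ by rw [he256]; norm_num, ← Real.exp_neg]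
        exact Real.exp_le_exp.2 (by linarith)
      have hexp0 : 0 < Real.exp (-t) := Real.exp_pos _
      have hrkpos : 0 < dist z (α k) := by rw [hrk]; positivity
      have hrk' : dist z (α k) ≤ D / 4 := by rw [hrk]; nlinarith
      have U1 : D ≤ dist z (α i) + dist z (α k) := by
        rw [hDdef, dist_comm z (α i)]; exact dist_triangle _ _ _
      have U2 : dist (α j) (α k) ≤ dist z (α j) + dist z (α k) := by
        rw [dist_comm z (α j)]; exact dist_triangle _ _ _
      have E1 : D ≤ δ + dist (α j) (α k) := by
        rw [hDdef, hδdef]; exact dist_triangle _ _ _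
      have hB1 : ¬ dist z (α i) ≤ δ / 2 := not_le.2 (by nlinarith)
      have hB2 : ¬ dist z (α j) ≤ δ / 2 := not_le.2 (by nlinarith [E1, h2])
      have hzi : z ≠ α i := dist_pos.1 (by nlinarith)
      have hzj : z ≠ α j := dist_pos.1 (by nlinarith [E1, h2])
      have hzk : z ≠ α k := dist_pos.1 hrkpos
      refine ⟨z, fun m => by
        rcases fin3_cover hij hik hjk (m := m) with hm | hm | hm <;> rw [hm] <;> assumption, ?_⟩
      have hG : spineG α i j k z = fun m => if m = k then Real.log (dist z (α k))
          else Real.log D := by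
        unfold spineG
        rw [← hδdef, ← hDdef, if_neg hB1, if_neg hB2, if_pos hrk']
      rw [hw]
      funext m
      simp only [hFdef, hG, ld_succ, Pi.add_apply, Pi.smul_apply, smul_eq_mul]
      by_cases hm : m = k
      · simp only [if_pos hm]
        rw [hrk, Real.log_mul (Real.exp_ne_zero _) hD0.ne', Real.log_exp]
        ring
      · simp [hm]
  refine ⟨v, l, i.succ, j.succ, 0, k.succ, fun q => F (q 0 / κ 0 + α 0), hl0,
    fun h => hij (Fin.succ_injective _ h), Fin.succ_ne_zero i,
    fun h => hik (Fin.succ_injective _ h), Fin.succ_ne_zero j,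
    fun h => hjk (Fin.succ_injective _ h), (Fin.succ_ne_zero k).symm, ?_, ?_⟩
  · rintro q ⟨z, hz, rfl⟩
    have hrec : κ 0 * (z - α 0) / κ 0 + α 0 = z := by
      rw [mul_div_cancel_left₀ _ (hκ 0), sub_add_cancel]
    simp only [hrec]
    obtain ⟨hmem, hbd⟩ := key1 z hz
    refine ⟨hmem, ?_⟩
    rw [pi_norm_le_iff_of_nonneg (by positivity)]
    intro m
    simpa [LogMap] using hbd m
  · intro p hp
    obtain ⟨z, hz, hFz⟩ := key2 p hp
    refine ⟨(fun m => κ m * (z - α m)), ⟨z, hz, rfl⟩, ?_⟩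
    have hrec : κ 0 * (z - α 0) / κ 0 + α 0 = z := by
      rw [mul_div_cancel_left₀ _ (hκ 0), sub_add_cancel]
    simp only [hrec]
    exact hFz

/-- For the complex line `L ⊆ (ℂ*)³` parametrised by
`z ↦ (κ₁(z-α₁), κ₂(z-α₂), κ₃(z-α₃))` there exist a tropical line `Γ` in `ℝ³` with
vertices `v` and `w = v + l•(u_c+u_d)` and a map `φ : L → Γ` with
`‖Log(q) - φ(q)‖_∞ ≤ 8 log 2` for all `q ∈ L`, and moreover
`Γ ∖ (U_{8 log 2}({v}) ∪ U_{8 log 2}({w})) ⊆ φ(L)`. -/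
theorem stmt_6 (α₁ α₂ α₃ : ℂ) (h12 : α₁ ≠ α₂) (h13 : α₁ ≠ α₃) (h23 : α₂ ≠ α₃)
    (κ₁ κ₂ κ₃ : ℂ) (hκ₁ : κ₁ ≠ 0) (hκ₂ : κ₂ ≠ 0) (hκ₃ : κ₃ ≠ 0) :
    ∃ (v : Fin 3 → ℝ) (l : ℝ) (a b c d : Fin 4)
      (φ : (Fin 3 → ℂ) → (Fin 3 → ℝ)),
      0 ≤ l ∧
      a ≠ b ∧ a ≠ c ∧ a ≠ d ∧ b ≠ c ∧ b ≠ d ∧ c ≠ d ∧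
      (∀ q ∈ (fun z : ℂ => ![κ₁ * (z - α₁), κ₂ * (z - α₂), κ₃ * (z - α₃)]) ''
          {z : ℂ | z ≠ α₁ ∧ z ≠ α₂ ∧ z ≠ α₃},
        φ q ∈ tropLine3 a b c d v l ∧ ‖LogMap q - φ q‖ ≤ 8 * Real.log 2) ∧
      tropLine3 a b c d v l \
          (nbhd (8 * Real.log 2) {v} ∪
           nbhd (8 * Real.log 2) {v + l • (lineDir c + lineDir d)})
        ⊆ φ '' ((fun z : ℂ => ![κ₁ * (z - α₁), κ₂ * (z - α₂), κ₃ * (z - α₃)]) ''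
            {z : ℂ | z ≠ α₁ ∧ z ≠ α₂ ∧ z ≠ α₃}) := by
  set α : Fin 3 → ℂ := ![α₁, α₂, α₃] with hα
  set κ : Fin 3 → ℂ := ![κ₁, κ₂, κ₃] with hκdef
  have hκ : ∀ m, κ m ≠ 0 := by
    intro m; fin_cases m <;> simpa [hκdef]
  have hfun : (fun z : ℂ => ![κ₁ * (z - α₁), κ₂ * (z - α₂), κ₃ * (z - α₃)]) =
      fun z : ℂ => fun m => κ m * (z - α m) := by
    funext z m; fin_cases m <;> simp [hα, hκdef]
  have hset : {z : ℂ | z ≠ α₁ ∧ z ≠ α₂ ∧ z ≠ α₃} = {z : ℂ | ∀ m, z ≠ α m} := by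
    ext z
    constructor
    · rintro ⟨ha, hb, hc⟩ m; fin_cases m <;> simpa [hα]
    · intro h
      exact ⟨by simpa [hα] using h 0, by simpa [hα] using h 1, by simpa [hα] using h 2⟩
  rw [hfun, hset]
  have e01 : α 0 ≠ α 1 := by simpa [hα] using h12
  have e02 : α 0 ≠ α 2 := by simpa [hα] using h13
  have e12 : α 1 ≠ α 2 := by simpa [hα] using h23
  rcases le_or_gt (dist (α 0) (α 1)) (dist (α 0) (α 2)) with hA | hA
  · rcases le_or_gt (dist (α 0) (α 1)) (dist (α 1) (α 2)) with hB | hB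
    · exact core α κ 0 1 2 (by decide) (by decide) (by decide) e01 hκ hA hB
    · refine core α κ 1 2 0 (by decide) (by decide) (by decide) e12 hκ ?_ ?_
      · rw [dist_comm (α 1) (α 0)]; linarith
      · rw [dist_comm (α 2) (α 0)]; linarith
  · rcases le_or_gt (dist (α 0) (α 2)) (dist (α 1) (α 2)) with hB | hB
    · refine core α κ 0 2 1 (by decide) (by decide) (by decide) e02 hκ ?_ ?_
      · linarith
      · rw [dist_comm (α 2) (α 1)]; linarith
    · refine core α κ 1 2 0 (by decide) (by decide) (by decide) e12 hκ ?_ ?_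
      · rw [dist_comm (α 1) (α 0)]; linarith
      · rw [dist_comm (α 2) (α 0)]; linarith
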